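/- Consider a homogeneous BNPG on the complete graph with n players whose costs are sorted so that c_1 ≤ c_2 ≤ ⋯ ≤ c_n. Let m be the least index i ∈ {1, …, n} such that c_i > Δg(i−1), and set m = n + 1 if no such index exists. Then the action profile x with x_i = 1 for all i < m and x_i = 0 for all i ≥ m is a pure-strategy Nash equilibrium. -/
import Mathlib


/-- Finite difference `Δg(m) = g(m+1) − g(m)`. -/
def Δg (g : ℕ → ℝ) (m : ℕ) : ℝ := g (m + 1) - g m

/-- Number of investing neighbors of player `i` under profile `x` in graph `G`. -/
noncomputable def nInv {V : Type*} (G : SimpleGraph V) (x : V → Bool) (i : V) : ℕ :=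
  {j | G.Adj i j ∧ x j = true}.ncard

/-- Pure-strategy Nash equilibrium of the BNPG on `G` with externalities `g` and costs `c`. -/
def IsPSNE {V : Type*} (G : SimpleGraph V) (g : V → ℕ → ℝ) (c : V → ℝ)
    (x : V → Bool) : Prop :=
  ∀ i, (x i = true → c i ≤ Δg (g i) (nInv G x i)) ∧
       (x i = false → Δg (g i) (nInv G x i) ≤ c i)

lemma card_filter_lt (n m : ℕ) (hmn : m ≤ n) :
    (Finset.univ.filter (fun j : Fin n => (j : ℕ) < m)).card = m := by
  have : Finset.univ.filter (fun j : Fin n => (j : ℕ) < m)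
      = Finset.univ.map (Fin.castLEEmb hmn) := by
    ext j
    simp only [Finset.mem_filter, Finset.mem_univ, true_and, Finset.mem_map]
    constructor
    · intro hj
      exact ⟨⟨j, hj⟩, by simp [Fin.castLEEmb, Fin.ext_iff]⟩
    · rintro ⟨k, -, rfl⟩
      simpa using k.isLt
  rw [this, Finset.card_map, Finset.card_univ, Fintype.card_fin]

lemma nInv_eq (n m : ℕ) (hmn : m ≤ n) (i : Fin n) :
    nInv (⊤ : SimpleGraph (Fin n)) (fun j => decide ((j : ℕ) < m)) i
      = if (i : ℕ) < m then m - 1 else m := by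
  unfold nInv
  have hset : {j | (⊤ : SimpleGraph (Fin n)).Adj i j ∧ (decide ((j : ℕ) < m)) = true}
      = ↑((Finset.univ.filter (fun j : Fin n => (j : ℕ) < m)).erase i) := by
    ext j
    simp only [Set.mem_setOf_eq, SimpleGraph.top_adj, decide_eq_true_eq, Finset.coe_erase,
      Set.mem_diff, Finset.coe_filter, Set.mem_setOf_eq, Finset.mem_univ, true_and,
      Set.mem_singleton_iff]
    tauto
  rw [hset, Set.ncard_coe_finset]
  by_cases hi : (i : ℕ) < m
  · rw [if_pos hi, Finset.card_erase_of_mem (by simp [hi]), card_filter_lt n m hmn]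
  · rw [if_neg hi, Finset.erase_eq_of_notMem (by simp [hi]), card_filter_lt n m hmn]

/-- homogeneous BNPG on the complete graph with sorted costs
`c 0 ≤ c 1 ≤ ⋯` (players `0,…,n−1`).  With `m` the least index `j` such that
`c j > Δg(j)` (and `m = n` if no such index exists), the profile investing exactly on the
players with index `< m` is a PSNE.  (Here indices are 0-based, so player `j` is the
`(j+1)`-st player and the paper's condition `c_i > Δg(i−1)` reads `c j > Δg(j)`.) -/
theorem stmt3 (n : ℕ) (g : ℕ → ℝ) (hmono : Monotone g) (c : Fin n → ℝ)
    (hsorted : ∀ i j : Fin n, i ≤ j → c i ≤ c j)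
    (m : ℕ) (hmn : m ≤ n)
    (hleast : ∀ j : Fin n, (j : ℕ) < m → c j ≤ Δg g (j : ℕ))
    (hm : ∀ h : m < n, Δg g m < c ⟨m, h⟩) :
    IsPSNE (⊤ : SimpleGraph (Fin n)) (fun _ => g) c (fun j => decide ((j : ℕ) < m)) := by
  intro i
  constructor
  · intro hx
    have hi : (i : ℕ) < m := by simpa using hx
    rw [nInv_eq n m hmn i, if_pos hi]
    have hm1 : m - 1 < n := by omega
    have hile : i ≤ (⟨m - 1, hm1⟩ : Fin n) := by
      simp [Fin.le_def]; omega
    calc c i ≤ c ⟨m - 1, hm1⟩ := hsorted _ _ hile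
      _ ≤ Δg g (m - 1) := hleast ⟨m - 1, hm1⟩ (by simp only [Fin.val_mk]; omega)
  · intro hx
    have hi : ¬ (i : ℕ) < m := by simpa using hx
    rw [nInv_eq n m hmn i, if_neg hi]
    have hmlt : m < n := lt_of_le_of_lt (le_of_not_gt hi) i.isLt
    have : (⟨m, hmlt⟩ : Fin n) ≤ i := by simp [Fin.le_def]; omega
    exact le_trans (le_of_lt (hm hmlt)) (hsorted _ _ this)
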